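/- For all real x with 0 < |x| < π/2, (1/2)·[(x/sin x)^2 + x/tan x] > (2·(x/sin x) + x/tan x)/3 > 1. -/

import Mathlib

open Real

lemma sin_gt_mul_cos {x : ℝ} (h1 : 0 < x) (h2 : x < π / 2) : x * Real.cos x < Real.sin x := by
  have hc : 0 < Real.cos x := Real.cos_pos_of_mem_Ioo ⟨by linarith [Real.pi_pos], h2⟩
  have ht := Real.lt_tan h1 h2
  rw [Real.tan_eq_sin_div_cos] at ht
  calc x * Real.cos x < (Real.sin x / Real.cos x) * Real.cos x := by
        exact mul_lt_mul_of_pos_right ht hc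
    _ = Real.sin x := by field_simp

lemma aux_mono : StrictMonoOn (fun x : ℝ => 2 - 2 * Real.cos x - x * Real.sin x)
    (Set.Icc 0 (π / 2)) := by
  apply strictMonoOn_of_deriv_pos (convex_Icc _ _)
  · fun_prop
  · intro x hx
    rw [interior_Icc] at hx
    have hd : HasDerivAt (fun x : ℝ => 2 - 2 * Real.cos x - x * Real.sin x)
        (Real.sin x - x * Real.cos x) x := by
      have h1 := ((hasDerivAt_const x (2:ℝ)).sub ((Real.hasDerivAt_cos x).const_mul 2)).sub
          ((hasDerivAt_id x).mul (Real.hasDerivAt_sin x))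
      simp only [id] at h1
      exact h1.congr_deriv (by ring)
    rw [hd.deriv]
    have := sin_gt_mul_cos hx.1 hx.2
    linarith

lemma aux_pos {x : ℝ} (h1 : 0 < x) (h2 : x < π / 2) :
    0 < 2 - 2 * Real.cos x - x * Real.sin x := by
  have := aux_mono (Set.left_mem_Icc.mpr (by positivity))
    (Set.mem_Icc.mpr ⟨h1.le, h2.le⟩) h1
  simpa using this

lemma cusa_mono : StrictMonoOn (fun x : ℝ => x * (2 + Real.cos x) - 3 * Real.sin x)
    (Set.Icc 0 (π / 2)) := by
  apply strictMonoOn_of_deriv_pos (convex_Icc _ _)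
  · fun_prop
  · intro x hx
    rw [interior_Icc] at hx
    have hd : HasDerivAt (fun x : ℝ => x * (2 + Real.cos x) - 3 * Real.sin x)
        (2 - 2 * Real.cos x - x * Real.sin x) x := by
      have h1 := ((hasDerivAt_id x).mul ((hasDerivAt_const x (2:ℝ)).add (Real.hasDerivAt_cos x))).sub
          ((Real.hasDerivAt_sin x).const_mul 3)
      simp only [id] at h1
      exact h1.congr_deriv (by simp only [Pi.add_apply]; ring)
    rw [hd.deriv]
    exact aux_pos hx.1 hx.2

lemma cusa {x : ℝ} (h1 : 0 < x) (h2 : x < π / 2) : 3 * Real.sin x < x * (2 + Real.cos x) := by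
  have := cusa_mono (Set.left_mem_Icc.mpr (by positivity))
    (Set.mem_Icc.mpr ⟨h1.le, h2.le⟩) h1
  simp only [Real.sin_zero, Real.cos_zero] at this
  linarith

lemma key {x : ℝ} (h1 : 0 < x) (h2 : x < π / 2) :
    (1 / 2) * ((x / Real.sin x) ^ 2 + x / Real.tan x) >
      (2 * (x / Real.sin x) + x / Real.tan x) / 3 ∧
      (2 * (x / Real.sin x) + x / Real.tan x) / 3 > 1 := by
  have hs : 0 < Real.sin x := Real.sin_pos_of_pos_of_lt_pi h1 (by linarith [Real.pi_pos])
  have hc : 0 < Real.cos x := Real.cos_pos_of_mem_Ioo ⟨by linarith [Real.pi_pos], h2⟩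
  have htan : x / Real.tan x = x * Real.cos x / Real.sin x := by
    rw [Real.tan_eq_sin_div_cos]; field_simp
  set s := x / Real.sin x with hsdef
  have hs1 : 1 < s := (one_lt_div hs).mpr (Real.sin_lt h1)
  have hcu := cusa h1 h2
  -- Huygens: 2s + t > 3
  have hH : (2 * s + x / Real.tan x) / 3 > 1 := by
    rw [htan, hsdef]
    have hrw : 2 * (x / Real.sin x) + x * Real.cos x / Real.sin x
        = x * (2 + Real.cos x) / Real.sin x := by field_simp
    rw [gt_iff_lt, lt_div_iff₀ (by norm_num : (0:ℝ) < 3), hrw, lt_div_iff₀ hs]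
    nlinarith
  refine ⟨?_, hH⟩
  have ht' : x / Real.tan x > 3 - 2 * s := by linarith [hH]
  rw [gt_iff_lt, div_lt_iff₀ (by norm_num : (0:ℝ) < 3)]
  nlinarith [sq_nonneg (s - 1)]

theorem stmt_5 (x : ℝ) (h1 : 0 < |x|) (h2 : |x| < π / 2) :
    (1 / 2) * ((x / sin x) ^ 2 + x / tan x) > (2 * (x / sin x) + x / tan x) / 3 ∧
      (2 * (x / sin x) + x / tan x) / 3 > 1 := by
  rcases abs_pos.mp h1 |>.lt_or_gt with hx | hx
  · have h2' : -x < π / 2 := by rwa [abs_of_neg hx] at h2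
    have := key (by linarith : 0 < -x) h2'
    simp only [Real.sin_neg, Real.tan_neg, neg_div_neg_eq] at this
    exact this
  · exact key hx (by rwa [abs_of_pos hx] at h2)
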